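/- arXiv:2502.03099 — 4 statements merged into one kernel-verified Lean document; each statement's English description precedes it below -/
import Mathlib

section
/- Let r ≥ 1 and let π = (π_0, …, π_r) be a permutation of {0, …, r}. Then the r×r matrix V_π is invertible, and for every ξ = (ξ_0, …, ξ_r) ∈ ℝ^{r+1} with increment vector x = (ξ_1−ξ_0, ξ_2−ξ_1, …, ξ_r−ξ_{r−1})ᵀ ∈ ℝ^r, one has V_π x = (ξ_{π_1}−ξ_{π_0}, ξ_{π_2}−ξ_{π_1}, …, ξ_{π_r}−ξ_{π_{r−1}})ᵀ. -/
open MeasureTheory ProbabilityTheory Filter Matrix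
open scoped ENNReal NNReal Topology Classical

noncomputable section

/-- The `r × (r+1)` difference matrix `D` with `D_{i,i} = -1`, `D_{i,i+1} = 1`. -/
def diffMatrix (r : ℕ) : Matrix (Fin r) (Fin (r+1)) ℝ :=
  Matrix.of fun i j => if j = i.castSucc then -1 else if j = i.succ then 1 else 0

/-- The `(r+1) × (r+1)` permutation matrix whose `i`-th row is `e_{π i}`. -/
def permMatrix {r : ℕ} (π : Fin (r+1) → Fin (r+1)) : Matrix (Fin (r+1)) (Fin (r+1)) ℝ :=
  Matrix.of fun i j => if j = π i then 1 else 0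

/-- The `(r+1) × r` cumulative-sum matrix `C` with `C_{i,j} = 1` iff `i ≥ j+1`. -/
def cumMatrix (r : ℕ) : Matrix (Fin (r+1)) (Fin r) ℝ :=
  Matrix.of fun i j => if (j : ℕ) + 1 ≤ (i : ℕ) then 1 else 0

/-- The matrix `V_π = D P_π C` associated with an ordinal pattern `π`. -/
def Vpi {r : ℕ} (π : Fin (r+1) → Fin (r+1)) : Matrix (Fin r) (Fin r) ℝ :=
  diffMatrix r * permMatrix π * cumMatrix r

lemma diff_mulVec {r : ℕ} (y : Fin (r+1) → ℝ) :
    (diffMatrix r).mulVec y = fun i => y i.succ - y i.castSucc := by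
  funext i
  have hne : (i.castSucc : Fin (r+1)) ≠ i.succ := Fin.castSucc_lt_succ.ne
  simp only [diffMatrix, Matrix.mulVec, dotProduct, Matrix.of_apply]
  have h : ∀ j : Fin (r+1),
      (if j = i.castSucc then (-1:ℝ) else if j = i.succ then 1 else 0) * y j
        = (if j = i.succ then y j else 0) - (if j = i.castSucc then y j else 0) := by
    intro j
    by_cases h1 : j = i.castSucc
    · subst h1; simp [hne]
    · by_cases h2 : j = i.succ <;> simp [h1, h2, hne.symm]
  simp_rw [h, Finset.sum_sub_distrib, Finset.sum_ite_eq', Finset.mem_univ, if_true]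

lemma perm_mulVec {r : ℕ} (π : Fin (r+1) → Fin (r+1)) (y : Fin (r+1) → ℝ) :
    (permMatrix π).mulVec y = fun i => y (π i) := by
  funext i
  simp [permMatrix, Matrix.mulVec, dotProduct, ite_mul, one_mul, zero_mul]

lemma cum_mulVec {r : ℕ} (ξ : Fin (r+1) → ℝ) :
    (cumMatrix r).mulVec (fun i : Fin r => ξ i.succ - ξ i.castSucc)
      = fun i => ξ i - ξ 0 := by
  funext i
  simp only [cumMatrix, Matrix.mulVec, dotProduct, Matrix.of_apply, ite_mul, one_mul,
    zero_mul]
  set f : ℕ → ℝ := fun n => ξ ⟨min n r, by omega⟩ with hf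
  have h1 : ∀ j : Fin r, (if (j:ℕ)+1 ≤ (i:ℕ) then ξ j.succ - ξ j.castSucc else 0)
      = (fun n : ℕ => if n+1 ≤ (i:ℕ) then f (n+1) - f n else 0) (j : ℕ) := by
    intro j
    have e1 : ξ j.succ = f ((j:ℕ)+1) := by
      simp only [hf]; congr 1; exact Fin.ext (by simp [Nat.min_eq_left j.isLt])
    have e2 : ξ j.castSucc = f (j:ℕ) := by
      simp only [hf]; congr 1; exact Fin.ext (by simp [Nat.min_eq_left j.isLt.le])
    simp [e1, e2]
  rw [Finset.sum_congr rfl (fun j _ => h1 j),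
    Fin.sum_univ_eq_sum_range (fun n : ℕ => if n+1 ≤ (i:ℕ) then f (n+1) - f n else 0)]
  have h2 : ∑ n ∈ Finset.range r, (if n+1 ≤ (i:ℕ) then f (n+1) - f n else 0)
      = ∑ n ∈ Finset.range (i:ℕ), (f (n+1) - f n) := by
    rw [← Finset.sum_filter]
    congr 1
    ext n
    simp only [Finset.mem_filter, Finset.mem_range]
    have := i.isLt
    omega
  rw [h2, Finset.sum_range_sub]
  have e3 : f (i:ℕ) = ξ i := by
    simp only [hf]; congr 1; exact Fin.ext (by simp [Nat.min_eq_left (Nat.lt_succ_iff.mp i.isLt)])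
  have e4 : f 0 = ξ 0 := by
    simp only [hf]; congr 1
  rw [e3, e4]

lemma Vpi_mulVec {r : ℕ} (π : Fin (r+1) → Fin (r+1)) (ξ : Fin (r+1) → ℝ) :
    (Vpi π).mulVec (fun i : Fin r => ξ i.succ - ξ i.castSucc)
      = fun i : Fin r => ξ (π i.succ) - ξ (π i.castSucc) := by
  rw [Vpi, ← Matrix.mulVec_mulVec, ← Matrix.mulVec_mulVec, cum_mulVec, perm_mulVec, diff_mulVec]
  funext i
  ring

/-- `V_π` is invertible, and for every `ξ ∈ ℝ^{r+1}` with increment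
vector `x`, `V_π x = (ξ_{π_1} - ξ_{π_0}, …, ξ_{π_r} - ξ_{π_{r-1}})ᵀ`. -/
theorem statement_1 (r : ℕ) (hr : 1 ≤ r) (π : Equiv.Perm (Fin (r+1))) :
    IsUnit (Vpi (fun i => π i)) ∧
    ∀ ξ : Fin (r+1) → ℝ,
      (Vpi (fun i => π i)).mulVec (fun i : Fin r => ξ i.succ - ξ i.castSucc)
        = fun i : Fin r => ξ (π i.succ) - ξ (π i.castSucc) := by
  refine ⟨?_, fun ξ => Vpi_mulVec _ ξ⟩
  rw [← Matrix.mulVec_injective_iff_isUnit]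
  have hker : ∀ v : Fin r → ℝ, (Vpi (fun i => π i)).mulVec v = 0 → v = 0 := by
    intro v hv
    set ξ : Fin (r+1) → ℝ := fun i => ∑ j : Fin r, if (j:ℕ) < (i:ℕ) then v j else 0 with hξ
    have hx : (fun i : Fin r => ξ i.succ - ξ i.castSucc) = v := by
      funext i
      simp only [hξ]
      rw [← Finset.sum_sub_distrib]
      have hpt : ∀ j : Fin r,
          ((if (j:ℕ) < ((i.succ : Fin (r+1)):ℕ) then v j else 0)
            - (if (j:ℕ) < ((i.castSucc : Fin (r+1)):ℕ) then v j else 0))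
          = if j = i then v j else 0 := by
        intro j
        simp only [Fin.val_succ, Fin.coe_castSucc]
        rcases eq_or_ne j i with h | h
        · subst h; simp
        · have hne : (j:ℕ) ≠ (i:ℕ) := fun hh => h (Fin.ext hh)
          split_ifs with h1 h2 h3 <;> simp <;> omega
      rw [Finset.sum_congr rfl (fun j _ => hpt j)]
      simp
    have hV := Vpi_mulVec (fun i => π i) ξ
    rw [hx, hv] at hV
    have hchain : ∀ i : Fin (r+1), ξ (π i) = ξ (π 0) := by
      intro i
      induction i using Fin.induction with
      | zero => rfl
      | succ i ih =>
        have h0 : ξ (π i.succ) - ξ (π i.castSucc) = 0 := (congrFun hV i).symm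
        rw [sub_eq_zero.mp h0, ih]
    have hconst : ∀ i : Fin (r+1), ξ i = ξ (π 0) := by
      intro i
      have := hchain (π.symm i)
      simpa using this
    funext i
    rw [← congrFun hx i, hconst i.succ, hconst i.castSucc, sub_self]
    rfl
  intro v w hvw
  have : (Vpi (fun i => π i)).mulVec (v - w) = 0 := by
    rw [Matrix.mulVec_sub, hvw, sub_self]
  exact sub_eq_zero.mp (hker _ this)
end
end

section
/- Let r ≥ 1, let π = (π_0, …, π_r) be a permutation of {0, …, r}, and let ξ_0, …, ξ_r be pairwise distinct real numbers with increment vector x = (ξ_1−ξ_0, …, ξ_r−ξ_{r−1})ᵀ ∈ ℝ^r. Then Π(ξ_0, …, ξ_r) = π if and only if V_π x ≤ 0 componentwise. -/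
open MeasureTheory ProbabilityTheory Filter Matrix
open scoped ENNReal NNReal Topology Classical

noncomputable section

/-- `IsOrdinalPattern ξ π` expresses that `π` is the ordinal pattern of `ξ`:
`π` is a bijection with `ξ_{π_0} ≥ ξ_{π_1} ≥ ⋯ ≥ ξ_{π_r}`, ties broken by
`π_{i-1} > π_i` whenever `ξ_{π_{i-1}} = ξ_{π_i}`. -/
def IsOrdinalPattern {r : ℕ} (ξ : Fin (r+1) → ℝ) (π : Fin (r+1) → Fin (r+1)) : Prop :=
  Function.Bijective π ∧
    ∀ i : Fin r, ξ (π i.succ) ≤ ξ (π i.castSucc) ∧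
      (ξ (π i.castSucc) = ξ (π i.succ) → π i.succ < π i.castSucc)


open Fin.NatCast in
/-- Key computation: the `i`-th entry of `V_π x` is `ξ (π i.succ) - ξ (π i.castSucc)`. -/
lemma Vpi_mulVec_apply {r : ℕ} (π : Fin (r+1) → Fin (r+1)) (ξ : Fin (r+1) → ℝ)
    (i : Fin r) :
    (Vpi π).mulVec (fun i : Fin r => ξ i.succ - ξ i.castSucc) i
      = ξ (π i.succ) - ξ (π i.castSucc) := by
  have hcum : (cumMatrix r).mulVec (fun i : Fin r => ξ i.succ - ξ i.castSucc)
      = fun j => ξ j - ξ 0 := by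
    funext j
    simp only [cumMatrix, Matrix.mulVec, Matrix.of_apply, dotProduct, ite_mul, one_mul,
      zero_mul]
    have key : ∀ k : Fin r, ξ k.succ - ξ k.castSucc
        = ξ ((k:ℕ)+1 : ℕ) - ξ ((k:ℕ) : ℕ) := by
      intro k
      congr 1 <;> congr 1 <;> ext
      · simp [Fin.val_cast_of_lt (Nat.succ_lt_succ k.isLt)]
      · simp [Fin.val_cast_of_lt (Nat.lt_succ_of_lt k.isLt)]
    calc (∑ k : Fin r, if (k:ℕ)+1 ≤ (j:ℕ) then ξ k.succ - ξ k.castSucc else 0)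
        = ∑ k ∈ Finset.range r, if k+1 ≤ (j:ℕ) then ξ (k+1 : ℕ) - ξ (k : ℕ) else 0 := by
          rw [← Fin.sum_univ_eq_sum_range]
          exact Finset.sum_congr rfl fun k _ => by rw [key k]
      _ = ∑ k ∈ Finset.range (j:ℕ), (ξ (k+1 : ℕ) - ξ (k : ℕ)) := by
          rw [← Finset.sum_filter]
          apply Finset.sum_congr _ (fun _ _ => rfl)
          ext k
          simp only [Finset.mem_filter, Finset.mem_range]
          omega
      _ = ξ ((j:ℕ) : ℕ) - ξ (0 : ℕ) := Finset.sum_range_sub (fun n => ξ n) _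
      _ = ξ j - ξ 0 := by simp
  have hperm : ∀ v : Fin (r+1) → ℝ, (permMatrix π).mulVec v = fun i => v (π i) := by
    intro v
    funext j
    simp [permMatrix, Matrix.mulVec, dotProduct, ite_mul, one_mul, zero_mul]
  have hD : ∀ v : Fin (r+1) → ℝ, (diffMatrix r).mulVec v i = v i.succ - v i.castSucc := by
    intro v
    have hne : (i.castSucc : Fin (r+1)) ≠ i.succ := by
      intro h
      have := congrArg Fin.val h
      simp [Fin.val_succ] at this
    simp only [diffMatrix, Matrix.mulVec, Matrix.of_apply, dotProduct]
    have : ∀ j : Fin (r+1),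
        (if j = i.castSucc then (-1:ℝ) else if j = i.succ then 1 else 0) * v j
          = (if j = i.succ then (1:ℝ) else 0) * v j
            + (if j = i.castSucc then (-1:ℝ) else 0) * v j := by
      intro j
      by_cases h1 : j = i.castSucc
      · subst h1
        simp [hne]
      · by_cases h2 : j = i.succ <;> simp [h1, h2, hne.symm]
    rw [Finset.sum_congr rfl fun j _ => this j, Finset.sum_add_distrib]
    simp only [ite_mul, one_mul, neg_one_mul, zero_mul, Finset.sum_ite_eq',
      Finset.mem_univ, if_true]
    ring
  rw [Vpi, ← Matrix.mulVec_mulVec, ← Matrix.mulVec_mulVec, hcum, hperm, hD]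
  ring

/-- For pairwise distinct values, `Π(ξ_0, …, ξ_r) = π` iff
`V_π x ≤ 0` componentwise, where `x` is the increment vector of `ξ`. -/
theorem statement_2 (r : ℕ) (hr : 1 ≤ r) (π : Equiv.Perm (Fin (r+1)))
    (ξ : Fin (r+1) → ℝ) (hdist : Function.Injective ξ) :
    IsOrdinalPattern ξ (fun i => π i) ↔
      (Vpi (fun i => π i)).mulVec (fun i : Fin r => ξ i.succ - ξ i.castSucc) ≤ 0 := by

  have hkey : ∀ i : Fin r,
      (Vpi (fun i => π i)).mulVec (fun i : Fin r => ξ i.succ - ξ i.castSucc) i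
        = ξ (π i.succ) - ξ (π i.castSucc) :=
    fun i => Vpi_mulVec_apply (fun i => π i) ξ i
  constructor
  · rintro ⟨-, h⟩ i
    have := (h i).1
    rw [hkey i]
    simpa [Pi.zero_apply] using sub_nonpos.mpr this
  · intro h
    refine ⟨π.bijective, fun i => ?_⟩
    have h1 : ξ (π i.succ) ≤ ξ (π i.castSucc) := by
      have := h i
      rw [hkey i] at this
      simpa [Pi.zero_apply] using sub_nonpos.mp this
    refine ⟨h1, fun heq => ?_⟩
    exfalso
    have : (i.castSucc : Fin (r+1)) = i.succ := π.injective (hdist heq)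
    have := congrArg Fin.val this
    simp [Fin.val_succ] at this
end
end

section
/- Let X_t = ∑_{j=0}^∞ A_j Z_{t−j} be a multivariate linear process in ℝ^r satisfying Assumption 1 with index J. Then p_J is Lipschitz, and for every j ≥ J the truncated distribution function p_j is Lipschitz with Lipschitz constant at most that of p_J; in particular sup_{j≥J} Lip(p_j) ≤ Lip(p_J) < ∞. -/
open MeasureTheory ProbabilityTheory Filter Matrix
open scoped ENNReal NNReal Topology Classical

noncomputable section

/-- Euclidean norm on `ℝ^r` (viewed as `Fin r → ℝ`). -/
def eucNorm {r : ℕ} (x : Fin r → ℝ) : ℝ := Real.sqrt (∑ i, (x i) ^ 2)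

/-- `LipWith L g` says that `g : ℝ^r → ℝ` is Lipschitz with constant `L`
with respect to the Euclidean norm. -/
def LipWith {r : ℕ} (L : ℝ) (g : (Fin r → ℝ) → ℝ) : Prop :=
  ∀ x y : Fin r → ℝ, |g x - g y| ≤ L * eucNorm (x - y)

lemma eucNorm_nonneg {r : ℕ} (x : Fin r → ℝ) : 0 ≤ eucNorm x := Real.sqrt_nonneg _

lemma abs_le_eucNorm {r : ℕ} (x : Fin r → ℝ) (i : Fin r) : |x i| ≤ eucNorm x := by
  rw [eucNorm, ← Real.sqrt_sq_eq_abs]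
  exact Real.sqrt_le_sqrt (Finset.single_le_sum (f := fun k => (x k) ^ 2)
    (fun k _ => sq_nonneg _) (Finset.mem_univ i))

lemma eucNorm_sub_comm {r : ℕ} (x y : Fin r → ℝ) : eucNorm (x - y) = eucNorm (y - x) := by
  unfold eucNorm
  congr 1
  refine Finset.sum_congr rfl fun i _ => ?_
  simp only [Pi.sub_apply]
  ring

lemma measurable_mulVecc {r : ℕ} (M : Matrix (Fin r) (Fin r) ℝ) :
    Measurable fun v : Fin r → ℝ => M.mulVec v := by
  apply measurable_pi_lambda
  intro i
  simp only [Matrix.mulVec, dotProduct]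
  exact Finset.measurable_sum _ fun k _ => (measurable_pi_apply k).const_mul _

/-- key convolution-type bound -/
lemma conv_bound {Ω : Type*} [MeasureSpace Ω] [IsProbabilityMeasure (ℙ : Measure Ω)]
    (W R : Ω → ℝ) (hW : Measurable W) (hR : Measurable R)
    (hind : IndepFun R W ℙ) (f : ℝ → ℝ) (M : ℝ) (hM : 0 ≤ M) (hf : ∀ x, f x ≤ M)
    (hmap : Measure.map W ℙ = MeasureTheory.volume.withDensity fun x => ENNReal.ofReal (f x))
    (c : ℝ) (hc : c ≠ 0) (a b : ℝ) :
    ℙ {ω | a < c * W ω + R ω ∧ c * W ω + R ω ≤ b} ≤ ENNReal.ofReal (M / |c| * (b - a)) := by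
  haveI : IsProbabilityMeasure (Measure.map R ℙ) := Measure.isProbabilityMeasure_map hR.aemeasurable
  haveI : IsProbabilityMeasure (Measure.map W ℙ) := Measure.isProbabilityMeasure_map hW.aemeasurable
  set s : Set (ℝ × ℝ) := {p | a < c * p.2 + p.1 ∧ c * p.2 + p.1 ≤ b} with hs_def
  have hs : MeasurableSet s := by
    apply MeasurableSet.inter
    · exact measurableSet_lt measurable_const ((measurable_snd.const_mul c).add measurable_fst)
    · exact measurableSet_le ((measurable_snd.const_mul c).add measurable_fst) measurable_const
  have hmapPair : Measure.map (fun ω => (R ω, W ω)) ℙ = (Measure.map R ℙ).prod (Measure.map W ℙ) :=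
    (indepFun_iff_map_prod_eq_prod_map_map hR.aemeasurable hW.aemeasurable).mp hind
  have h1 : ℙ {ω | a < c * W ω + R ω ∧ c * W ω + R ω ≤ b}
      = (Measure.map R ℙ).prod (Measure.map W ℙ) s := by
    rw [← hmapPair, Measure.map_apply (hR.prodMk hW) hs]
    rfl
  have key : ∀ ρ : ℝ, (Measure.map W ℙ) (Prod.mk ρ ⁻¹' s) ≤ ENNReal.ofReal (M / |c| * (b - a)) := by
    intro ρ
    have hpre : Prod.mk ρ ⁻¹' s = {w : ℝ | a - ρ < c * w ∧ c * w ≤ b - ρ} := by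
      ext w
      simp only [Set.mem_preimage, hs_def, Set.mem_setOf_eq]
      constructor <;> rintro ⟨h1, h2⟩ <;> exact ⟨by linarith, by linarith⟩
    have hvol : MeasureTheory.volume {w : ℝ | a - ρ < c * w ∧ c * w ≤ b - ρ}
        = ENNReal.ofReal ((b - a) / |c|) := by
      rcases hc.lt_or_gt with hneg | hpos
      · have hset : {w : ℝ | a - ρ < c * w ∧ c * w ≤ b - ρ}
            = Set.Ico ((b - ρ) / c) ((a - ρ) / c) := by
          ext w
          simp only [Set.mem_setOf_eq, Set.mem_Ico, div_le_iff_of_neg hneg,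
            lt_div_iff_of_neg hneg]
          constructor <;> rintro ⟨h1, h2⟩ <;> constructor <;> linarith
        rw [hset, Real.volume_Ico]
        congr 1
        rw [abs_of_neg hneg, div_sub_div_same,
          show a - ρ - (b - ρ) = -(b - a) from by ring, neg_div, div_neg]
      · have hset : {w : ℝ | a - ρ < c * w ∧ c * w ≤ b - ρ}
            = Set.Ioc ((a - ρ) / c) ((b - ρ) / c) := by
          ext w
          simp only [Set.mem_setOf_eq, Set.mem_Ioc, div_lt_iff₀ hpos, le_div_iff₀ hpos]
          constructor <;> rintro ⟨h1, h2⟩ <;> constructor <;> linarith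
        rw [hset, Real.volume_Ioc]
        congr 1
        rw [abs_of_pos hpos, div_sub_div_same,
          show b - ρ - (a - ρ) = b - a from by ring]
    have hmeas' : MeasurableSet {w : ℝ | a - ρ < c * w ∧ c * w ≤ b - ρ} := by
      apply MeasurableSet.inter
      · exact measurableSet_lt measurable_const (measurable_id.const_mul c)
      · exact measurableSet_le (measurable_id.const_mul c) measurable_const
    calc (Measure.map W ℙ) (Prod.mk ρ ⁻¹' s)
        = ∫⁻ x in {w : ℝ | a - ρ < c * w ∧ c * w ≤ b - ρ}, ENNReal.ofReal (f x) := by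
          rw [hpre, hmap, withDensity_apply _ hmeas']
      _ ≤ ∫⁻ _ in {w : ℝ | a - ρ < c * w ∧ c * w ≤ b - ρ}, ENNReal.ofReal M :=
          lintegral_mono fun x => ENNReal.ofReal_le_ofReal (hf x)
      _ = ENNReal.ofReal M * MeasureTheory.volume {w : ℝ | a - ρ < c * w ∧ c * w ≤ b - ρ} :=
          setLIntegral_const _ _
      _ = ENNReal.ofReal (M / |c| * (b - a)) := by
          rw [hvol, ← ENNReal.ofReal_mul hM]
          congr 1
          ring
  calc ℙ {ω | a < c * W ω + R ω ∧ c * W ω + R ω ≤ b}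
      = ∫⁻ ρ, (Measure.map W ℙ) (Prod.mk ρ ⁻¹' s) ∂(Measure.map R ℙ) := by
        rw [h1, Measure.prod_apply hs]
    _ ≤ ∫⁻ _, ENNReal.ofReal (M / |c| * (b - a)) ∂(Measure.map R ℙ) := lintegral_mono key
    _ = ENNReal.ofReal (M / |c| * (b - a)) := by simp

/-- Independence of sums over disjoint index sets. -/
lemma indep_of_disjoint_sums {Ω : Type*} [MeasureSpace Ω] {r : ℕ}
    (Z : ℤ → Ω → (Fin r → ℝ)) (hZmeas : ∀ j, Measurable (Z j))
    (hZindep : iIndepFun Z (ℙ : Measure Ω))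
    (A : ℕ → Matrix (Fin r) (Fin r) ℝ) (s t : Finset ℕ) (hst : Disjoint s t) :
    IndepFun (fun ω => ∑ i ∈ s, (A i).mulVec (Z (-(i : ℤ)) ω))
      (fun ω => ∑ i ∈ t, (A i).mulVec (Z (-(i : ℤ)) ω)) (ℙ : Measure Ω) := by
  have hginj : Function.Injective (fun i : ℕ => -(i : ℤ)) := by
    intro m n h
    simpa using h
  set g : ℕ → ℤ := fun i => -(i : ℤ) with hg
  set S : Finset ℤ := s.image g with hS
  set T : Finset ℤ := t.image g with hT
  have hST : Disjoint S T := (Finset.disjoint_image hginj).mpr hst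
  have base := hZindep.indepFun_finset S T hST hZmeas
  set φ : ((i : S) → Fin r → ℝ) → (Fin r → ℝ) :=
    fun z => ∑ i ∈ s.attach, (A i.1).mulVec (z ⟨g i.1, Finset.mem_image_of_mem g i.2⟩) with hφ
  set ψ : ((i : T) → Fin r → ℝ) → (Fin r → ℝ) :=
    fun z => ∑ i ∈ t.attach, (A i.1).mulVec (z ⟨g i.1, Finset.mem_image_of_mem g i.2⟩) with hψ
  have hφm : Measurable φ :=
    Finset.measurable_sum _ fun i _ => (measurable_mulVecc _).comp (measurable_pi_apply _)
  have hψm : Measurable ψ :=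
    Finset.measurable_sum _ fun i _ => (measurable_mulVecc _).comp (measurable_pi_apply _)
  have h := base.comp hφm hψm
  have h1 : (φ ∘ fun a (i : S) => Z i a) = fun ω => ∑ i ∈ s, (A i).mulVec (Z (-(i : ℤ)) ω) := by
    funext ω
    exact Finset.sum_attach s fun n => (A n).mulVec (Z (g n) ω)
  have h2 : (ψ ∘ fun a (i : T) => Z i a) = fun ω => ∑ i ∈ t, (A i).mulVec (Z (-(i : ℤ)) ω) := by
    funext ω
    exact Finset.sum_attach t fun n => (A n).mulVec (Z (g n) ω)
  rw [h1, h2] at h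
  exact h

/-- Independence of a coordinate from a linear combination of the others. -/
lemma indep_coord {Ω : Type*} [MeasureSpace Ω] {r : ℕ}
    (W : Fin r → Ω → ℝ) (hWmeas : ∀ k, Measurable (W k))
    (hindep : iIndepFun W (ℙ : Measure Ω)) (k0 : Fin r)
    (E : Fin r → ℝ) :
    IndepFun (fun ω => ∑ k ∈ Finset.univ.erase k0, E k * W k ω) (W k0) (ℙ : Measure Ω) := by
  set S : Finset (Fin r) := Finset.univ.erase k0 with hS
  have hST : Disjoint S ({k0} : Finset (Fin r)) := by
    simp [hS, Finset.disjoint_singleton_right]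
  have base := hindep.indepFun_finset S {k0} hST hWmeas
  set φ : ((k : S) → ℝ) → ℝ := fun z => ∑ k ∈ S.attach, E k.1 * z k with hφ
  set ψ : ((k : ({k0} : Finset (Fin r))) → ℝ) → ℝ :=
    fun z => z ⟨k0, Finset.mem_singleton_self k0⟩ with hψ
  have hφm : Measurable φ :=
    Finset.measurable_sum _ fun k _ => (measurable_pi_apply _).const_mul _
  have hψm : Measurable ψ := measurable_pi_apply _
  have h := base.comp hφm hψm
  have h1 : (φ ∘ fun a (k : S) => W k a) = fun ω => ∑ k ∈ S, E k * W k ω := by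
    funext ω
    exact Finset.sum_attach S fun k => E k * W k ω
  have h2 : (ψ ∘ fun a (k : ({k0} : Finset (Fin r))) => W k a) = W k0 := by
    funext ω
    rfl
  rw [h1, h2] at h
  exact h
lemma measurableSet_le_pi {r : ℕ} (w : Fin r → ℝ) :
    MeasurableSet {y : Fin r → ℝ | y ≤ w} := by
  have : {y : Fin r → ℝ | y ≤ w} = ⋂ i, {y : Fin r → ℝ | y i ≤ w i} := by
    ext y; simp [Pi.le_def]
  rw [this]
  exact MeasurableSet.iInter fun i => measurableSet_le (measurable_pi_apply i) measurable_const

/-- transfer of Lipschitz bounds through independent additive noise -/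
lemma lip_transfer {Ω : Type*} [MeasureSpace Ω] [IsProbabilityMeasure (ℙ : Measure Ω)] {r : ℕ}
    (S T : Ω → Fin r → ℝ) (hS : Measurable S) (hT : Measurable T)
    (hind : IndepFun T S (ℙ : Measure Ω)) (L : ℝ) (hL : 0 ≤ L)
    (hLip : ∀ u v, |((ℙ : Measure Ω) {ω | S ω ≤ u}).toReal
      - ((ℙ : Measure Ω) {ω | S ω ≤ v}).toReal| ≤ L * eucNorm (u - v)) :
    ∀ u v, ((ℙ : Measure Ω) {ω | S ω + T ω ≤ u}).toReal
      - ((ℙ : Measure Ω) {ω | S ω + T ω ≤ v}).toReal ≤ L * eucNorm (u - v) := by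
  intro u v
  haveI : IsProbabilityMeasure (Measure.map S (ℙ : Measure Ω)) :=
    Measure.isProbabilityMeasure_map hS.aemeasurable
  haveI : IsProbabilityMeasure (Measure.map T (ℙ : Measure Ω)) :=
    Measure.isProbabilityMeasure_map hT.aemeasurable
  set m : (Fin r → ℝ) → ℝ≥0∞ := fun w => Measure.map S (ℙ : Measure Ω) {y | y ≤ w} with hm
  have hmfin : ∀ w, m w ≠ ∞ := fun w => measure_ne_top _ _
  have hmS : ∀ w, (ℙ : Measure Ω) {ω | S ω ≤ w} = m w := by
    intro w
    show _ = Measure.map S (ℙ : Measure Ω) {y | y ≤ w}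
    rw [Measure.map_apply hS (measurableSet_le_pi w)]
    rfl
  have hprod : Measure.map (fun ω => (T ω, S ω)) (ℙ : Measure Ω)
      = (Measure.map T (ℙ : Measure Ω)).prod (Measure.map S (ℙ : Measure Ω)) :=
    (indepFun_iff_map_prod_eq_prod_map_map hT.aemeasurable hS.aemeasurable).mp hind
  have key : ∀ w, (ℙ : Measure Ω) {ω | S ω + T ω ≤ w}
      = ∫⁻ t, m (w - t) ∂(Measure.map T (ℙ : Measure Ω)) := by
    intro w
    have hsm : MeasurableSet {p : (Fin r → ℝ) × (Fin r → ℝ) | p.2 + p.1 ≤ w} := by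
      have : {p : (Fin r → ℝ) × (Fin r → ℝ) | p.2 + p.1 ≤ w}
          = ⋂ i, {p : (Fin r → ℝ) × (Fin r → ℝ) | p.2 i + p.1 i ≤ w i} := by
        ext p; simp [Pi.le_def]
      rw [this]
      refine MeasurableSet.iInter fun i => measurableSet_le ?_ measurable_const
      exact ((measurable_pi_apply i).comp measurable_snd).add
        ((measurable_pi_apply i).comp measurable_fst)
    have h1 : (ℙ : Measure Ω) {ω | S ω + T ω ≤ w}
        = (Measure.map (fun ω => (T ω, S ω)) (ℙ : Measure Ω))
            {p : (Fin r → ℝ) × (Fin r → ℝ) | p.2 + p.1 ≤ w} := by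
      rw [Measure.map_apply (hT.prodMk hS) hsm]
      rfl
    rw [h1, hprod, Measure.prod_apply hsm]
    refine lintegral_congr fun t => ?_
    congr 1
    ext y
    simp only [Set.mem_preimage, Set.mem_setOf_eq]
    exact le_sub_iff_add_le.symm
  set c : ℝ≥0∞ := ENNReal.ofReal (L * eucNorm (u - v)) with hc
  have hpt : ∀ t, m (u - t) ≤ m (v - t) + c := by
    intro t
    have h2 := hLip (u - t) (v - t)
    rw [sub_sub_sub_cancel_right] at h2
    have h4 : ((ℙ : Measure Ω) {ω | S ω ≤ u - t}).toReal
        ≤ ((ℙ : Measure Ω) {ω | S ω ≤ v - t}).toReal + L * eucNorm (u - v) := by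
      have := (abs_sub_le_iff.mp h2).1
      linarith
    rw [hmS, hmS] at h4
    calc m (u - t) = ENNReal.ofReal ((m (u - t)).toReal) :=
          (ENNReal.ofReal_toReal (hmfin _)).symm
      _ ≤ ENNReal.ofReal ((m (v - t)).toReal + L * eucNorm (u - v)) :=
          ENNReal.ofReal_le_ofReal h4
      _ ≤ ENNReal.ofReal ((m (v - t)).toReal) + c := ENNReal.ofReal_add_le
      _ = m (v - t) + c := by rw [ENNReal.ofReal_toReal (hmfin _)]
  have hmain : (ℙ : Measure Ω) {ω | S ω + T ω ≤ u}
      ≤ (ℙ : Measure Ω) {ω | S ω + T ω ≤ v} + c := by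
    rw [key u, key v]
    calc ∫⁻ t, m (u - t) ∂(Measure.map T (ℙ : Measure Ω))
        ≤ ∫⁻ t, (m (v - t) + c) ∂(Measure.map T (ℙ : Measure Ω)) := lintegral_mono hpt
      _ = (∫⁻ t, m (v - t) ∂(Measure.map T (ℙ : Measure Ω))) + c := by
          rw [lintegral_add_right _ measurable_const, lintegral_const, measure_univ, mul_one]
  have hfin : (ℙ : Measure Ω) {ω | S ω + T ω ≤ v} + c ≠ ∞ :=
    ENNReal.add_ne_top.mpr ⟨measure_ne_top _ _, ENNReal.ofReal_ne_top⟩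
  have h5 := ENNReal.toReal_mono hfin hmain
  rw [ENNReal.toReal_add (measure_ne_top _ _) ENNReal.ofReal_ne_top,
    ENNReal.toReal_ofReal (mul_nonneg hL (eucNorm_nonneg _))] at h5
  linarith

/-- Part 1: the distribution function of Y is Lipschitz. -/
lemma part1_lip {Ω : Type*} [MeasureSpace Ω] [IsProbabilityMeasure (ℙ : Measure Ω)] {r : ℕ}
    (Y : Ω → Fin r → ℝ) (hYmeas : Measurable Y)
    (D : Matrix (Fin r) (Fin r) ℝ) (hD : IsUnit D)
    (hindep : iIndepFun (fun k ω => D.mulVec (Y ω) k) (ℙ : Measure Ω))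
    (hdens : ∀ k : Fin r, ∃ f : ℝ → ℝ, (∀ x, 0 ≤ f x) ∧ (∃ M, ∀ x, f x ≤ M) ∧
      Measure.map (fun ω => D.mulVec (Y ω) k) (ℙ : Measure Ω)
        = MeasureTheory.volume.withDensity fun x => ENNReal.ofReal (f x)) :
    ∃ L : ℝ, 0 ≤ L ∧ ∀ u v : Fin r → ℝ,
      |((ℙ : Measure Ω) {ω | Y ω ≤ u}).toReal - ((ℙ : Measure Ω) {ω | Y ω ≤ v}).toReal|
        ≤ L * eucNorm (u - v) := by
  have hWmeas : ∀ k, Measurable fun ω => D.mulVec (Y ω) k :=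
    fun k => (measurable_pi_apply k).comp ((measurable_mulVecc D).comp hYmeas)
  have hdet : IsUnit D.det := (Matrix.isUnit_iff_isUnit_det D).mp hD
  have hED : D⁻¹ * D = 1 := Matrix.nonsing_inv_mul D hdet
  have hYi : ∀ ω (i : Fin r), Y ω i = ∑ k, D⁻¹ i k * D.mulVec (Y ω) k := by
    intro ω i
    have h0 : (D⁻¹).mulVec (D.mulVec (Y ω)) = Y ω := by
      rw [Matrix.mulVec_mulVec, hED, Matrix.one_mulVec]
    calc Y ω i = ((D⁻¹).mulVec (D.mulVec (Y ω))) i := by rw [h0]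
      _ = ∑ k, D⁻¹ i k * D.mulVec (Y ω) k := by
          simp [Matrix.mulVec, dotProduct]
  have hcoord : ∀ i : Fin r, ∃ C : ℝ, 0 ≤ C ∧ ∀ a b : ℝ,
      (ℙ : Measure Ω) {ω | a < Y ω i ∧ Y ω i ≤ b} ≤ ENNReal.ofReal (C * (b - a)) := by
    intro i
    have hrow : ∃ k0, D⁻¹ i k0 ≠ 0 := by
      by_contra h
      push_neg at h
      have h1 : (D⁻¹ * D) i i = 0 := by
        rw [Matrix.mul_apply]
        exact Finset.sum_eq_zero fun k _ => by rw [h k, zero_mul]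
      rw [hED, Matrix.one_apply_eq] at h1
      exact one_ne_zero h1
    obtain ⟨k0, hk0⟩ := hrow
    obtain ⟨f, hf0, ⟨M, hfM⟩, hmap⟩ := hdens k0
    have hM0 : 0 ≤ M := le_trans (hf0 0) (hfM 0)
    refine ⟨M / |D⁻¹ i k0|, div_nonneg hM0 (abs_nonneg _), ?_⟩
    intro a b
    have hind := indep_coord (fun k ω => D.mulVec (Y ω) k) hWmeas hindep k0
      (fun k => D⁻¹ i k)
    have hRmeas : Measurable fun ω =>
        ∑ k ∈ Finset.univ.erase k0, D⁻¹ i k * D.mulVec (Y ω) k :=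
      Finset.measurable_sum _ fun k _ => (hWmeas k).const_mul _
    have hsum : ∀ ω, Y ω i = D⁻¹ i k0 * D.mulVec (Y ω) k0
        + ∑ k ∈ Finset.univ.erase k0, D⁻¹ i k * D.mulVec (Y ω) k := by
      intro ω
      rw [hYi ω i]
      exact (Finset.add_sum_erase _ (fun k => D⁻¹ i k * D.mulVec (Y ω) k)
        (Finset.mem_univ k0)).symm
    have hseteq : {ω | a < Y ω i ∧ Y ω i ≤ b}
        = {ω | a < D⁻¹ i k0 * D.mulVec (Y ω) k0
            + ∑ k ∈ Finset.univ.erase k0, D⁻¹ i k * D.mulVec (Y ω) k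
          ∧ D⁻¹ i k0 * D.mulVec (Y ω) k0
            + ∑ k ∈ Finset.univ.erase k0, D⁻¹ i k * D.mulVec (Y ω) k ≤ b} :=
      Set.ext fun ω => by simp only [Set.mem_setOf_eq, hsum ω]
    rw [hseteq]
    exact conv_bound (fun ω => D.mulVec (Y ω) k0) _ (hWmeas k0) hRmeas hind f M hM0 hfM
      hmap _ hk0 a b
  choose C hC0 hC using hcoord
  refine ⟨∑ k, C k, Finset.sum_nonneg fun k _ => hC0 k, ?_⟩
  have hside : ∀ u v : Fin r → ℝ,
      ((ℙ : Measure Ω) {ω | Y ω ≤ u}).toReal - ((ℙ : Measure Ω) {ω | Y ω ≤ v}).toReal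
        ≤ (∑ k, C k) * eucNorm (u - v) := by
    intro u v
    set B : Fin r → Set Ω :=
      fun k => {ω | min (u k) (v k) < Y ω k ∧ Y ω k ≤ max (u k) (v k)} with hB
    have hincl : {ω | Y ω ≤ u} ⊆ {ω | Y ω ≤ v} ∪ ⋃ k, B k := by
      intro ω hω
      by_cases h : Y ω ≤ v
      · exact Or.inl h
      · right
        rw [Pi.le_def] at h
        push_neg at h
        obtain ⟨k, hk⟩ := h
        exact Set.mem_iUnion.mpr ⟨k, lt_of_le_of_lt (min_le_right _ _) hk,
          le_trans (hω k) (le_max_left _ _)⟩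
    have h2 : ∀ k, (ℙ : Measure Ω) (B k) ≤ ENNReal.ofReal (C k * eucNorm (u - v)) := by
      intro k
      refine le_trans (hC k (min (u k) (v k)) (max (u k) (v k))) (ENNReal.ofReal_le_ofReal ?_)
      have habs : max (u k) (v k) - min (u k) (v k) = |u k - v k| := by
        rw [max_comm, min_comm]
        exact max_sub_min_eq_abs _ _
      rw [habs]
      have : |u k - v k| ≤ eucNorm (u - v) := by
        have := abs_le_eucNorm (u - v) k
        simpa [Pi.sub_apply] using this
      exact mul_le_mul_of_nonneg_left this (hC0 k)
    have h1 : (ℙ : Measure Ω) {ω | Y ω ≤ u}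
        ≤ (ℙ : Measure Ω) {ω | Y ω ≤ v} + ENNReal.ofReal ((∑ k, C k) * eucNorm (u - v)) := by
      refine le_trans (measure_mono hincl) (le_trans (measure_union_le _ _) ?_)
      refine add_le_add le_rfl (le_trans (measure_iUnion_fintype_le _ _) ?_)
      calc ∑ k, (ℙ : Measure Ω) (B k)
          ≤ ∑ k, ENNReal.ofReal (C k * eucNorm (u - v)) := Finset.sum_le_sum fun k _ => h2 k
        _ = ENNReal.ofReal (∑ k, C k * eucNorm (u - v)) :=
            (ENNReal.ofReal_sum_of_nonneg fun k _ =>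
              mul_nonneg (hC0 k) (eucNorm_nonneg _)).symm
        _ = ENNReal.ofReal ((∑ k, C k) * eucNorm (u - v)) := by rw [← Finset.sum_mul]
    have h4 := ENNReal.toReal_mono
      (ENNReal.add_ne_top.mpr ⟨measure_ne_top _ _, ENNReal.ofReal_ne_top⟩) h1
    rw [ENNReal.toReal_add (measure_ne_top _ _) ENNReal.ofReal_ne_top,
      ENNReal.toReal_ofReal (mul_nonneg (Finset.sum_nonneg fun k _ => hC0 k)
        (eucNorm_nonneg _))] at h4
    linarith
  intro u v
  refine abs_sub_le_iff.mpr ⟨hside u v, ?_⟩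
  rw [eucNorm_sub_comm]
  exact hside v u

/-- Under Assumption 1 with index `J`, the truncated distribution
function `p_J` is Lipschitz, and every `p_j` with `j ≥ J` is Lipschitz with constant
at most that of `p_J`. -/
theorem statement_12
    {Ω : Type*} [MeasureSpace Ω] [IsProbabilityMeasure (ℙ : Measure Ω)]
    (r : ℕ) (hr : 1 ≤ r)
    (A : ℕ → Matrix (Fin r) (Fin r) ℝ)
    (Z : ℤ → Ω → (Fin r → ℝ))
    (hZmeas : ∀ j, Measurable (Z j))
    (hZindep : iIndepFun Z (ℙ : Measure Ω))
    (hZident : ∀ j, Measure.map (Z j) (ℙ : Measure Ω) = Measure.map (Z 0) (ℙ : Measure Ω))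
    (hZint : Integrable (Z 0) (ℙ : Measure Ω))
    (hZcent : ∫ ω, Z 0 ω ∂(ℙ : Measure Ω) = 0)
    (X : ℤ → Ω → (Fin r → ℝ))
    (hX : ∀ t : ℤ, ∀ᵐ ω ∂(ℙ : Measure Ω),
      HasSum (fun j : ℕ => (A j).mulVec (Z (t - (j : ℤ)) ω)) (X t ω))
    -- truncated distribution functions
    (pj : ℕ → (Fin r → ℝ) → ℝ)
    (hpj : ∀ j u, pj j u =
      ((ℙ : Measure Ω)
        {ω | (∑ i ∈ Finset.range (j + 1), (A i).mulVec (Z (-(i : ℤ)) ω)) ≤ u}).toReal)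
    -- Assumption 1 with index J:
    (J : ℕ) (D : Matrix (Fin r) (Fin r) ℝ) (hD : IsUnit D)
    (hindep : iIndepFun
      (fun i ω => D.mulVec (∑ j ∈ Finset.range (J + 1), (A j).mulVec (Z (-(j : ℤ)) ω)) i)
      (ℙ : Measure Ω))
    (hdens : ∀ i : Fin r, ∃ f : ℝ → ℝ, (∀ x, 0 ≤ f x) ∧ (∃ M, ∀ x, f x ≤ M) ∧
      Measure.map
          (fun ω => D.mulVec (∑ j ∈ Finset.range (J + 1), (A j).mulVec (Z (-(j : ℤ)) ω)) i)
          (ℙ : Measure Ω)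
        = MeasureTheory.volume.withDensity fun x => ENNReal.ofReal (f x))
    (hA0 : ∀ j ≤ J, A j ≠ 0) :
    (∃ L : ℝ, 0 ≤ L ∧ LipWith L (pj J)) ∧
      ∀ j, J ≤ j → ∀ L : ℝ, 0 ≤ L → LipWith L (pj J) → LipWith L (pj j) := by
  have hYmeas : Measurable fun ω => ∑ i ∈ Finset.range (J + 1), (A i).mulVec (Z (-(i : ℤ)) ω) :=
    Finset.measurable_sum _ fun i _ => (measurable_mulVecc _).comp (hZmeas _)
  obtain ⟨L0, hL00, hLip0⟩ := part1_lip
    (fun ω => ∑ i ∈ Finset.range (J + 1), (A i).mulVec (Z (-(i : ℤ)) ω)) hYmeas D hD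
    hindep hdens
  constructor
  · refine ⟨L0, hL00, ?_⟩
    intro u v
    rw [hpj J u, hpj J v]
    exact hLip0 u v
  · intro j hj L hL hLipJ
    have hTmeas : Measurable fun ω =>
        ∑ i ∈ Finset.Ico (J + 1) (j + 1), (A i).mulVec (Z (-(i : ℤ)) ω) :=
      Finset.measurable_sum _ fun i _ => (measurable_mulVecc _).comp (hZmeas _)
    have hdisj : Disjoint (Finset.Ico (J + 1) (j + 1)) (Finset.range (J + 1)) := by
      rw [Finset.range_eq_Ico]
      exact (Finset.Ico_disjoint_Ico_consecutive 0 (J + 1) (j + 1)).symm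
    have hind := indep_of_disjoint_sums Z hZmeas hZindep A
      (Finset.Ico (J + 1) (j + 1)) (Finset.range (J + 1)) hdisj
    have hLip' : ∀ u v : Fin r → ℝ,
        |((ℙ : Measure Ω)
            {ω | (∑ i ∈ Finset.range (J + 1), (A i).mulVec (Z (-(i : ℤ)) ω)) ≤ u}).toReal
          - ((ℙ : Measure Ω)
            {ω | (∑ i ∈ Finset.range (J + 1), (A i).mulVec (Z (-(i : ℤ)) ω)) ≤ v}).toReal|
          ≤ L * eucNorm (u - v) := by
      intro u v
      rw [← hpj J u, ← hpj J v]
      exact hLipJ u v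
    have key := lip_transfer
      (fun ω => ∑ i ∈ Finset.range (J + 1), (A i).mulVec (Z (-(i : ℤ)) ω))
      (fun ω => ∑ i ∈ Finset.Ico (J + 1) (j + 1), (A i).mulVec (Z (-(i : ℤ)) ω))
      hYmeas hTmeas hind.symm.symm L hL hLip'
    have hsumsplit : ∀ ω : Ω,
        ∑ i ∈ Finset.range (j + 1), (A i).mulVec (Z (-(i : ℤ)) ω)
          = (∑ i ∈ Finset.range (J + 1), (A i).mulVec (Z (-(i : ℤ)) ω))
            + ∑ i ∈ Finset.Ico (J + 1) (j + 1), (A i).mulVec (Z (-(i : ℤ)) ω) := by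
      intro ω
      rw [Finset.range_eq_Ico, Finset.range_eq_Ico]
      exact (Finset.sum_Ico_consecutive _ (Nat.zero_le (J + 1)) (by omega : J + 1 ≤ j + 1)).symm
    have hsplit : ∀ w : Fin r → ℝ, pj j w = ((ℙ : Measure Ω)
        {ω | (∑ i ∈ Finset.range (J + 1), (A i).mulVec (Z (-(i : ℤ)) ω))
          + (∑ i ∈ Finset.Ico (J + 1) (j + 1), (A i).mulVec (Z (-(i : ℤ)) ω)) ≤ w}).toReal := by
      intro w
      rw [hpj j w]
      congr 1
      apply congrArg
      exact Set.ext fun ω => by rw [Set.mem_setOf_eq, Set.mem_setOf_eq, hsumsplit ω]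
    intro x y
    rw [hsplit x, hsplit y]
    refine abs_sub_le_iff.mpr ⟨key x y, ?_⟩
    rw [eucNorm_sub_comm]
    exact key y x
end
end

section
/- Let X_t = ∑_{j=0}^∞ A_j Z_{t−j} be a multivariate linear process in ℝ^r with A_j = j^{d−1} L(j) for large j, where d ∈ (0, 1/2) and L is a continuous matrix-valued function each of whose entries is slowly varying at infinity, and where (Z_j)_{j∈ℤ} are i.i.d. centered with covariance matrix Σ. Then for every ζ with 0 < ζ < 1 − 2d there exists a constant C > 0 such that for all t and all j ≥ 1, E[‖R_{t,j}‖²] ≤ C · j^{2d−1+ζ}, where R_{t,j} := ∑_{i=j+1}^∞ A_i Z_{t−i}. -/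
open MeasureTheory ProbabilityTheory Filter Matrix
open scoped ENNReal NNReal Topology Classical

noncomputable section

/-- Potter-type upper bound from slow variation at `c = 2` plus continuity. -/
lemma potter_bound (ℓ : ℝ → ℝ) (hc : Continuous ℓ)
    (hs : Tendsto (fun x : ℝ => ℓ (2 * x) / ℓ x) atTop (𝓝 1))
    (ζ : ℝ) (hζ : 0 < ζ) :
    ∃ C : ℝ, 0 < C ∧ ∀ x : ℝ, 1 ≤ x → |ℓ x| ≤ C * x ^ ζ := by
  have h2ζ : (1:ℝ) < 2 ^ ζ := Real.one_lt_rpow_iff_of_pos (by norm_num) |>.mpr (Or.inl ⟨by norm_num, hζ⟩)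
  set ε : ℝ := min (1/2) (2 ^ ζ - 1) with hε
  have hε0 : 0 < ε := lt_min (by norm_num) (by linarith)
  have hε1 : ε < 1 := lt_of_le_of_lt (min_le_left _ _) (by norm_num)
  have hε2 : 1 + ε ≤ 2 ^ ζ := by
    have := min_le_right (1/2 : ℝ) (2 ^ ζ - 1); linarith [hε ▸ this]
  -- eventual ratio bound
  obtain ⟨X₀, hX₀⟩ : ∃ X₀ : ℝ, ∀ x ≥ X₀, |ℓ (2 * x) / ℓ x - 1| < ε := by
    have := (Metric.tendsto_atTop.mp hs) ε hε0
    obtain ⟨X₀, h⟩ := this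
    exact ⟨X₀, fun x hx => by simpa [Real.dist_eq] using h x hx⟩
  set X : ℝ := max X₀ 1 with hX
  have hX1 : (1:ℝ) ≤ X := le_max_right _ _
  have step : ∀ x : ℝ, X ≤ x → |ℓ (2 * x)| ≤ (1 + ε) * |ℓ x| := by
    intro x hx
    have hr := hX₀ x (le_trans (le_max_left _ _) hx)
    have hne : ℓ x ≠ 0 := by
      intro h0
      rw [h0, div_zero] at hr
      simp only [zero_sub, abs_neg, abs_one] at hr; linarith
    have : |ℓ (2 * x) / ℓ x| ≤ 1 + ε := by
      calc |ℓ (2 * x) / ℓ x| = |ℓ (2 * x) / ℓ x - 1 + 1| := by ring_nf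
        _ ≤ |ℓ (2 * x) / ℓ x - 1| + |1| := abs_add_le _ _
        _ ≤ 1 + ε := by rw [abs_one]; linarith [hr.le]
    calc |ℓ (2 * x)| = |ℓ (2 * x) / ℓ x| * |ℓ x| := by
          rw [← abs_mul, div_mul_cancel₀ _ hne]
      _ ≤ (1 + ε) * |ℓ x| := by
          exact mul_le_mul_of_nonneg_right this (abs_nonneg _)
  -- bound on [X, 2X]
  obtain ⟨M₀, hM₀⟩ : ∃ M₀ : ℝ, ∀ y ∈ Set.Icc X (2 * X), |ℓ y| ≤ M₀ := by
    obtain ⟨M₀, hM₀⟩ := (isCompact_Icc (a := X) (b := 2 * X)).exists_bound_of_continuousOn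
      hc.continuousOn
    exact ⟨M₀, fun y hy => by simpa using hM₀ y hy⟩
  set M : ℝ := max M₀ 1 with hM
  have hM1 : (1:ℝ) ≤ M := le_max_right _ _
  have key : ∀ n : ℕ, ∀ y : ℝ, X ≤ y → y ≤ X * 2 ^ n → |ℓ y| ≤ M * y ^ ζ := by
    intro n
    induction n with
    | zero =>
      intro y h1 h2
      have hy : y = X := le_antisymm (by simpa using h2) h1
      have : (1:ℝ) ≤ y ^ ζ := Real.one_le_rpow (hy ▸ hX1) hζ.le
      have h3 : |ℓ y| ≤ M₀ := hM₀ y ⟨h1, by nlinarith⟩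
      nlinarith [le_max_left M₀ (1:ℝ)]
    | succ n ih =>
      intro y h1 h2
      by_cases hy2 : y ≤ 2 * X
      · have : (1:ℝ) ≤ y ^ ζ := Real.one_le_rpow (le_trans hX1 h1) hζ.le
        have h3 : |ℓ y| ≤ M₀ := hM₀ y ⟨h1, hy2⟩
        nlinarith [le_max_left M₀ (1:ℝ)]
      · push_neg at hy2
        have hy0 : 0 < y := by linarith
        have hX' : X ≤ y / 2 := by linarith
        have hle : y / 2 ≤ X * 2 ^ n := by
          have : (0:ℝ) < 2 := by norm_num
          rw [div_le_iff₀ this]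
          calc y ≤ X * 2 ^ (n+1) := h2
            _ = X * 2 ^ n * 2 := by ring
        have h4 := ih (y / 2) hX' hle
        have h5 := step (y / 2) hX'
        have h6 : (2 : ℝ) * (y / 2) = y := by ring
        rw [h6] at h5
        have h7 : (y / 2) ^ ζ * 2 ^ ζ = y ^ ζ := by
          rw [← Real.mul_rpow (by linarith) (by norm_num)]
          congr 1; ring
        have h8 : (0:ℝ) < (y/2) ^ ζ := Real.rpow_pos_of_pos (by linarith) ζ
        calc |ℓ y| ≤ (1 + ε) * |ℓ (y/2)| := h5
          _ ≤ (1 + ε) * (M * (y/2) ^ ζ) := by nlinarith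
          _ ≤ 2 ^ ζ * (M * (y/2) ^ ζ) :=
              mul_le_mul_of_nonneg_right hε2 (by nlinarith)
          _ = M * ((y/2) ^ ζ * 2 ^ ζ) := by ring
          _ = M * y ^ ζ := by rw [h7]
  -- bound on [1, X]
  obtain ⟨M₂, hM₂⟩ : ∃ M₂ : ℝ, ∀ y ∈ Set.Icc (1:ℝ) X, |ℓ y| ≤ M₂ := by
    obtain ⟨M₂, hM₂⟩ := (isCompact_Icc (a := (1:ℝ)) (b := X)).exists_bound_of_continuousOn
      hc.continuousOn
    exact ⟨M₂, fun y hy => by simpa using hM₂ y hy⟩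
  refine ⟨M + max M₂ 0, by positivity, ?_⟩
  intro x hx
  have hxζ : (1:ℝ) ≤ x ^ ζ := Real.one_le_rpow hx hζ.le
  by_cases hxX : X ≤ x
  · obtain ⟨n, hn⟩ : ∃ n : ℕ, x / X ≤ 2 ^ n := pow_unbounded_of_one_lt _ (by norm_num) |>.imp
      (fun n h => h.le)
    have h2 : x ≤ X * 2 ^ n := by
      rw [div_le_iff₀ (by linarith)] at hn; linarith [hn]
    have := key n x hxX h2
    nlinarith [Real.rpow_pos_of_pos (show (0:ℝ) < x by linarith) ζ, le_max_right M₂ (0:ℝ)]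
  · push_neg at hxX
    have h1 := hM₂ x ⟨hx, hxX.le⟩
    have h2 : M + max M₂ 0 ≤ (M + max M₂ 0) * x ^ ζ :=
      le_mul_of_one_le_right (by positivity) hxζ
    nlinarith [le_max_left M₂ (0:ℝ)]


lemma rpow_step (q : ℝ) (hq0 : q < 0) (m : ℝ) (hm : 2 ≤ m) :
    (-q) * m ^ (q - 1) ≤ (m - 1) ^ q - m ^ q := by
  have hm1 : (1:ℝ) ≤ m - 1 := by linarith
  have hlt : m - 1 < m := by linarith
  obtain ⟨c, hc, heq⟩ := exists_hasDerivAt_eq_slope (f := fun x : ℝ => x ^ q)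
    (f' := fun x : ℝ => q * x ^ (q - 1)) hlt
    (by
      apply ContinuousOn.rpow_const continuousOn_id
      intro x hx; left; simp only [id]; intro h; rw [h] at hx; exact absurd hx.1 (by linarith))
    (fun x hx => Real.hasDerivAt_rpow_const (Or.inl (by intro h; rw [h] at hx; linarith [hx.1])))
  have hc0 : 0 < c := by linarith [hc.1]
  have hcm : c ≤ m := hc.2.le
  have hmono : m ^ (q - 1) ≤ c ^ (q - 1) :=
    Real.rpow_le_rpow_of_nonpos hc0 hcm (by linarith)
  have heq' : q * c ^ (q - 1) = m ^ q - (m - 1) ^ q := by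
    rw [heq]; field_simp; ring
  nlinarith [heq']

lemma rpow_tail_sum (q : ℝ) (hq0 : q < 0) (hq1 : -1 < q) (j : ℕ) (hj : 1 ≤ j) :
    Summable (fun i : ℕ => ((j : ℝ) + 1 + i) ^ (q - 1)) ∧
    ∑' i : ℕ, ((j : ℝ) + 1 + i) ^ (q - 1) ≤ (j : ℝ) ^ q / (-q) := by
  have hj1 : (1:ℝ) ≤ (j:ℝ) := by exact_mod_cast hj
  have hqpos : 0 < -q := by linarith
  have hbound : ∀ n : ℕ, ∑ i ∈ Finset.range n, ((j : ℝ) + 1 + i) ^ (q - 1) ≤ (j : ℝ) ^ q / (-q) := by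
    intro n
    have hterm : ∀ i : ℕ, ((j : ℝ) + 1 + i) ^ (q - 1)
        ≤ (((j : ℝ) + i) ^ q - ((j : ℝ) + (i + 1)) ^ q) / (-q) := by
      intro i
      have h2 : (2:ℝ) ≤ (j:ℝ) + 1 + i := by
        have : (0:ℝ) ≤ (i:ℕ) := Nat.cast_nonneg i
        linarith
      rw [le_div_iff₀ hqpos]
      have h3 : ((j:ℝ) + 1 + i) - 1 = (j:ℝ) + i := by ring
      have h4 : ((j:ℝ) + (i + 1)) = (j:ℝ) + 1 + i := by push_cast; ring
      rw [h4]
      calc ((j : ℝ) + 1 + i) ^ (q-1) * (-q) = (-q) * ((j:ℝ)+1+i) ^ (q-1) := by ring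
        _ ≤ (((j:ℝ)+1+i) - 1) ^ q - ((j:ℝ)+1+i) ^ q := rpow_step q hq0 _ h2
        _ = ((j:ℝ)+i) ^ q - ((j:ℝ)+1+i) ^ q := by rw [h3]
    calc ∑ i ∈ Finset.range n, ((j : ℝ) + 1 + i) ^ (q - 1)
        ≤ ∑ i ∈ Finset.range n, (((j : ℝ) + i) ^ q - ((j : ℝ) + (i + 1)) ^ q) / (-q) :=
          Finset.sum_le_sum (fun i _ => hterm i)
      _ = (∑ i ∈ Finset.range n, ((fun k : ℕ => ((j : ℝ) + k) ^ q) i - (fun k : ℕ => ((j : ℝ) + k) ^ q) (i+1))) / (-q) := by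
          rw [← Finset.sum_div]; congr 1; apply Finset.sum_congr rfl; intro i _; push_cast; ring_nf
      _ = (((j:ℝ) + (0:ℕ)) ^ q - ((j:ℝ) + (n:ℕ)) ^ q) / (-q) := by
          rw [Finset.sum_range_sub' (fun k : ℕ => ((j : ℝ) + k) ^ q) n]
      _ ≤ (j : ℝ) ^ q / (-q) := by
          have h0 : ((j:ℝ) + (0:ℕ)) ^ q - ((j:ℝ) + (n:ℕ)) ^ q ≤ (j:ℝ) ^ q := by
            simp only [Nat.cast_zero, add_zero]
            linarith [Real.rpow_nonneg (show (0:ℝ) ≤ (j:ℝ) + (n:ℕ) by positivity) q]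
          gcongr
  have hnonneg : ∀ i : ℕ, 0 ≤ ((j : ℝ) + 1 + i) ^ (q - 1) := by
    intro i; positivity
  have hsummable := summable_of_sum_range_le hnonneg hbound
  exact ⟨hsummable, Summable.tsum_le_of_sum_range_le hsummable hbound⟩


set_option maxHeartbeats 2000000

/-- second-moment bound for the tails `R_{t,j}` of a long-range
dependent multivariate linear process with slowly varying coefficient part. -/
theorem statement_14
    {Ω : Type*} [MeasureSpace Ω] [IsProbabilityMeasure (ℙ : Measure Ω)]
    (r : ℕ) (hr : 1 ≤ r)
    (A : ℕ → Matrix (Fin r) (Fin r) ℝ)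
    (Z : ℤ → Ω → (Fin r → ℝ))
    (hZmeas : ∀ j, Measurable (Z j))
    (hZindep : iIndepFun Z (ℙ : Measure Ω))
    (hZident : ∀ j, Measure.map (Z j) (ℙ : Measure Ω) = Measure.map (Z 0) (ℙ : Measure Ω))
    (hZint : Integrable (Z 0) (ℙ : Measure Ω))
    (hZcent : ∫ ω, Z 0 ω ∂(ℙ : Measure Ω) = 0)
    (Sig : Matrix (Fin r) (Fin r) ℝ)
    (hZcov : ∀ i k : Fin r, ∫ ω, Z 0 ω i * Z 0 ω k ∂(ℙ : Measure Ω) = Sig i k)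
    (hZ2 : Integrable (fun ω => ∑ i, (Z 0 ω i) ^ 2) (ℙ : Measure Ω))
    (X : ℤ → Ω → (Fin r → ℝ))
    (hX : ∀ t : ℤ, ∀ᵐ ω ∂(ℙ : Measure Ω),
      HasSum (fun j : ℕ => (A j).mulVec (Z (t - (j : ℤ)) ω)) (X t ω))
    -- A_j = j^{d-1} L(j) for large j, with L continuous and entrywise slowly varying
    (d : ℝ) (hd0 : 0 < d) (hd12 : d < 1 / 2)
    (L : ℝ → Matrix (Fin r) (Fin r) ℝ)
    (hLcont : Continuous L)
    (hLslow : ∀ (i k : Fin r) (c : ℝ), 0 < c →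
      Tendsto (fun x : ℝ => L (c * x) i k / L x i k) atTop (𝓝 1))
    (hAL : ∃ N : ℕ, ∀ j : ℕ, N ≤ j → A j = ((j : ℝ) ^ (d - 1)) • L (j : ℝ))
    -- the tails of the series
    (R : ℤ → ℕ → Ω → (Fin r → ℝ))
    (hR : ∀ (t : ℤ) (j : ℕ), ∀ᵐ ω ∂(ℙ : Measure Ω),
      HasSum (fun i : ℕ => (A (j + 1 + i)).mulVec (Z (t - ((j : ℤ) + 1 + (i : ℤ))) ω))
        (R t j ω)) :
    ∀ ζ : ℝ, 0 < ζ → ζ < 1 - 2 * d →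
      ∃ C : ℝ, 0 < C ∧ ∀ (t : ℤ) (j : ℕ), 1 ≤ j →
        ∫ ω, ∑ i, (R t j ω i) ^ 2 ∂(ℙ : Measure Ω) ≤ C * (j : ℝ) ^ (2 * d - 1 + ζ) := by
  intro ζ hζ0 hζ1
  set q : ℝ := 2 * d - 1 + ζ with hq_def
  have hq0 : q < 0 := by simp only [hq_def]; linarith
  have hq1 : -1 < q := by simp only [hq_def]; linarith
  -- ====================================================================
  -- Part 1 : probabilistic preliminaries
  -- ====================================================================
  set τ : ℝ := ∫ ω, ∑ b, (Z 0 ω b) ^ 2 ∂(ℙ : Measure Ω) with hτ_def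
  have hτ0 : 0 ≤ τ := integral_nonneg (fun ω => Finset.sum_nonneg fun b _ => sq_nonneg _)
  -- transfer of integrability / integrals along identical distribution
  have transfer : ∀ (g : (Fin r → ℝ) → ℝ), Measurable g →
      Integrable (fun ω => g (Z 0 ω)) (ℙ : Measure Ω) → ∀ s : ℤ,
      Integrable (fun ω => g (Z s ω)) (ℙ : Measure Ω) ∧
        ∫ ω, g (Z s ω) ∂(ℙ : Measure Ω) = ∫ ω, g (Z 0 ω) ∂(ℙ : Measure Ω) := by
    intro g hg h0 s
    have h1 : Integrable g ((ℙ : Measure Ω).map (Z 0)) :=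
      (integrable_map_measure hg.aestronglyMeasurable (hZmeas 0).aemeasurable).mpr h0
    have h2 : Integrable g ((ℙ : Measure Ω).map (Z s)) := (hZident s) ▸ h1
    refine ⟨(integrable_map_measure hg.aestronglyMeasurable (hZmeas s).aemeasurable).mp h2, ?_⟩
    calc ∫ ω, g (Z s ω) ∂(ℙ : Measure Ω)
        = ∫ v, g v ∂((ℙ : Measure Ω).map (Z s)) :=
          (integral_map (hZmeas s).aemeasurable hg.aestronglyMeasurable).symm
      _ = ∫ v, g v ∂((ℙ : Measure Ω).map (Z 0)) := by rw [hZident s]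
      _ = ∫ ω, g (Z 0 ω) ∂(ℙ : Measure Ω) :=
          integral_map (hZmeas 0).aemeasurable hg.aestronglyMeasurable
  -- integrability of squared coordinates
  have hsq0 : ∀ b : Fin r, Integrable (fun ω => (Z 0 ω b) ^ 2) (ℙ : Measure Ω) := by
    intro b
    refine hZ2.mono' ?_ ?_
    · exact (((measurable_pi_apply b).comp (hZmeas 0)).pow_const 2).aestronglyMeasurable
    · refine Filter.Eventually.of_forall fun ω => ?_
      rw [Real.norm_eq_abs, abs_of_nonneg (sq_nonneg _)]
      exact Finset.single_le_sum (f := fun b => (Z 0 ω b) ^ 2)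
        (fun c _ => sq_nonneg _) (Finset.mem_univ b)
  have hsq : ∀ (s : ℤ) (b : Fin r), Integrable (fun ω => (Z s ω b) ^ 2) (ℙ : Measure Ω) :=
    fun s b => (transfer (fun v => (v b) ^ 2)
      ((measurable_pi_apply b).pow_const 2) (hsq0 b) s).1
  -- integrability of coordinates
  have hco0 : ∀ b : Fin r, Integrable (fun ω => Z 0 ω b) (ℙ : Measure Ω) := by
    intro b
    refine hZint.norm.mono' ?_ ?_
    · exact ((measurable_pi_apply b).comp (hZmeas 0)).aestronglyMeasurable
    · exact Filter.Eventually.of_forall fun ω => by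
        simpa using norm_le_pi_norm (Z 0 ω) b
  have hco : ∀ (s : ℤ) (b : Fin r), Integrable (fun ω => Z s ω b) (ℙ : Measure Ω) :=
    fun s b => (transfer (fun v => v b) (measurable_pi_apply b) (hco0 b) s).1
  -- coordinates are centered
  have hmean : ∀ (s : ℤ) (b : Fin r), ∫ ω, Z s ω b ∂(ℙ : Measure Ω) = 0 := by
    intro s b
    have h1 := (transfer (fun v => v b) (measurable_pi_apply b) (hco0 b) s).2
    have h2 : ∫ ω, Z 0 ω b ∂(ℙ : Measure Ω) = 0 := by
      have := (ContinuousLinearMap.proj (R := ℝ) (φ := fun _ : Fin r => ℝ) b).integral_comp_comm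
        hZint
      simp only [ContinuousLinearMap.proj_apply] at this
      rw [this, hZcent]; rfl
    rw [h1, h2]
  -- second moment of coordinates sum
  have hτs : ∀ s : ℤ, ∫ ω, ∑ b, (Z s ω b) ^ 2 ∂(ℙ : Measure Ω) = τ := by
    intro s
    exact (transfer (fun v => ∑ b, (v b) ^ 2)
      (Finset.measurable_sum _ fun b _ => (measurable_pi_apply b).pow_const 2) hZ2 s).2
  have hZ2s : ∀ s : ℤ, Integrable (fun ω => ∑ b, (Z s ω b) ^ 2) (ℙ : Measure Ω) :=
    fun s => (transfer (fun v => ∑ b, (v b) ^ 2)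
      (Finset.measurable_sum _ fun b _ => (measurable_pi_apply b).pow_const 2) hZ2 s).1
  -- integrability of products of coordinates
  have hprod : ∀ (s s' : ℤ) (b c : Fin r),
      Integrable (fun ω => Z s ω b * Z s' ω c) (ℙ : Measure Ω) := by
    intro s s' b c
    refine (((hsq s b).add (hsq s' c)).div_const 2).mono' ?_ ?_
    · exact (((measurable_pi_apply b).comp (hZmeas s)).mul
        ((measurable_pi_apply c).comp (hZmeas s'))).aestronglyMeasurable
    · refine Filter.Eventually.of_forall fun ω => ?_
      simp only [Pi.add_apply, Real.norm_eq_abs]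
      nlinarith [sq_nonneg (|Z s ω b| - |Z s' ω c|), abs_mul (Z s ω b) (Z s' ω c),
        sq_abs (Z s ω b), sq_abs (Z s' ω c), abs_nonneg (Z s ω b * Z s' ω c)]
  -- products at distinct times have zero mean
  have hzero : ∀ (s s' : ℤ), s ≠ s' → ∀ (b c : Fin r),
      ∫ ω, Z s ω b * Z s' ω c ∂(ℙ : Measure Ω) = 0 := by
    intro s s' hne b c
    have hind : IndepFun (fun ω => Z s ω b) (fun ω => Z s' ω c) (ℙ : Measure Ω) :=
      (hZindep.indepFun hne).comp (measurable_pi_apply b) (measurable_pi_apply c)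
    have h := hind.integral_mul_eq_mul_integral (hco s b).aestronglyMeasurable (hco s' c).aestronglyMeasurable
    rw [show ((fun ω => Z s ω b) * fun ω => Z s' ω c) = fun ω => Z s ω b * Z s' ω c
      from rfl] at h
    rw [h, hmean s b, zero_mul]
  -- ====================================================================
  -- Part 2 : second moment bound for partial sums of the tail
  -- ====================================================================
  have moment_bound : ∀ (t : ℤ) (j : ℕ) (n : ℕ),
      Integrable (fun ω => ∑ a, (∑ i ∈ Finset.range n,
          (A (j + 1 + i)).mulVec (Z (t - ((j : ℤ) + 1 + (i : ℤ))) ω) a) ^ 2) (ℙ : Measure Ω) ∧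
      ∫ ω, ∑ a, (∑ i ∈ Finset.range n,
          (A (j + 1 + i)).mulVec (Z (t - ((j : ℤ) + 1 + (i : ℤ))) ω) a) ^ 2 ∂(ℙ : Measure Ω)
        ≤ (∑ i ∈ Finset.range n, ∑ a, ∑ b, (A (j + 1 + i) a b) ^ 2) * τ := by
    intro t j n
    set s : ℕ → ℤ := fun i => t - ((j : ℤ) + 1 + (i : ℤ)) with hs_def
    set B : ℕ → Matrix (Fin r) (Fin r) ℝ := fun i => A (j + 1 + i) with hB_def
    set W : ℕ → Ω → Fin r → ℝ := fun i ω => (B i).mulVec (Z (s i) ω) with hW_def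
    have hs_inj : ∀ i i' : ℕ, i ≠ i' → s i ≠ s i' := by
      intro i i' h hcontra
      apply h
      simp only [hs_def] at hcontra
      omega
    -- expansion of products of coordinates of W
    have hW_eq : ∀ (i i' : ℕ) (a : Fin r), (fun ω => W i ω a * W i' ω a)
        = fun ω => ∑ b, ∑ c, (B i a b * B i' a c) * (Z (s i) ω b * Z (s i') ω c) := by
      intro i i' a
      funext ω
      simp only [hW_def, Matrix.mulVec, dotProduct, Finset.sum_mul_sum]
      refine Finset.sum_congr rfl fun b _ => Finset.sum_congr rfl fun c _ => by ring
    have hWWint : ∀ (i i' : ℕ) (a : Fin r),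
        Integrable (fun ω => W i ω a * W i' ω a) (ℙ : Measure Ω) := by
      intro i i' a
      rw [hW_eq]
      exact integrable_finset_sum _ fun b _ => integrable_finset_sum _ fun c _ =>
        (hprod (s i) (s i') b c).const_mul _
    have hWWzero : ∀ (i i' : ℕ), i ≠ i' → ∀ a : Fin r,
        ∫ ω, W i ω a * W i' ω a ∂(ℙ : Measure Ω) = 0 := by
      intro i i' hne a
      rw [hW_eq]
      rw [integral_finset_sum _ fun b _ => integrable_finset_sum _ fun c _ =>
        (hprod (s i) (s i') b c).const_mul _]
      refine Finset.sum_eq_zero fun b _ => ?_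
      rw [integral_finset_sum _ fun c _ => (hprod (s i) (s i') b c).const_mul _]
      refine Finset.sum_eq_zero fun c _ => ?_
      rw [integral_const_mul, hzero (s i) (s i') (hs_inj i i' hne) b c, mul_zero]
    -- diagonal bound via Cauchy–Schwarz
    have hWdiag : ∀ i : ℕ, ∫ ω, ∑ a, (W i ω a) ^ 2 ∂(ℙ : Measure Ω)
        ≤ (∑ a, ∑ b, (B i a b) ^ 2) * τ := by
      intro i
      have hpt : ∀ ω, ∑ a, (W i ω a) ^ 2
          ≤ (∑ a, ∑ b, (B i a b) ^ 2) * ∑ b, (Z (s i) ω b) ^ 2 := by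
        intro ω
        rw [Finset.sum_mul]
        refine Finset.sum_le_sum fun a _ => ?_
        simp only [hW_def, Matrix.mulVec, dotProduct]
        exact Finset.sum_mul_sq_le_sq_mul_sq Finset.univ _ _
      calc ∫ ω, ∑ a, (W i ω a) ^ 2 ∂(ℙ : Measure Ω)
          ≤ ∫ ω, (∑ a, ∑ b, (B i a b) ^ 2) * ∑ b, (Z (s i) ω b) ^ 2 ∂(ℙ : Measure Ω) := by
            refine integral_mono_of_nonneg ?_ ((hZ2s (s i)).const_mul _) ?_
            · exact Filter.Eventually.of_forall fun ω =>
                Finset.sum_nonneg fun a _ => sq_nonneg _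
            · exact Filter.Eventually.of_forall hpt
        _ = (∑ a, ∑ b, (B i a b) ^ 2) * τ := by rw [integral_const_mul, hτs (s i)]
    -- expansion of the square of partial sums
    have hexp : ∀ ω, ∑ a, (∑ i ∈ Finset.range n, W i ω a) ^ 2
        = ∑ a, ∑ i ∈ Finset.range n, ∑ i' ∈ Finset.range n, W i ω a * W i' ω a := by
      intro ω
      refine Finset.sum_congr rfl fun a _ => ?_
      rw [sq, Finset.sum_mul_sum]
    have hint : Integrable (fun ω => ∑ a, (∑ i ∈ Finset.range n, W i ω a) ^ 2)
        (ℙ : Measure Ω) := by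
      simp only [hexp]
      exact integrable_finset_sum _ fun a _ => integrable_finset_sum _ fun i _ =>
        integrable_finset_sum _ fun i' _ => hWWint i i' a
    constructor
    · -- integrability claim (note: same function after unfolding the `set`s)
      exact hint
    · have hstep1 : ∫ ω, ∑ a, (∑ i ∈ Finset.range n, W i ω a) ^ 2 ∂(ℙ : Measure Ω)
          = ∑ a, ∑ i ∈ Finset.range n, ∑ i' ∈ Finset.range n,
              ∫ ω, W i ω a * W i' ω a ∂(ℙ : Measure Ω) := by
        simp only [hexp]
        rw [integral_finset_sum _ fun a _ => integrable_finset_sum _ fun i _ =>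
          integrable_finset_sum _ fun i' _ => hWWint i i' a]
        refine Finset.sum_congr rfl fun a _ => ?_
        rw [integral_finset_sum _ fun i _ => integrable_finset_sum _ fun i' _ => hWWint i i' a]
        refine Finset.sum_congr rfl fun i _ => ?_
        rw [integral_finset_sum _ fun i' _ => hWWint i i' a]
      have hstep2 : ∀ a : Fin r, ∀ i ∈ Finset.range n,
          ∑ i' ∈ Finset.range n, ∫ ω, W i ω a * W i' ω a ∂(ℙ : Measure Ω)
            = ∫ ω, (W i ω a) ^ 2 ∂(ℙ : Measure Ω) := by
        intro a i hi
        rw [Finset.sum_eq_single i]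
        · congr 1; funext ω; rw [sq]
        · intro i' _ hne; exact hWWzero i i' (fun h => hne h.symm) a
        · intro h; exact absurd hi h
      calc ∫ ω, ∑ a, (∑ i ∈ Finset.range n, W i ω a) ^ 2 ∂(ℙ : Measure Ω)
          = ∑ a, ∑ i ∈ Finset.range n, ∫ ω, (W i ω a) ^ 2 ∂(ℙ : Measure Ω) := by
            rw [hstep1]
            exact Finset.sum_congr rfl fun a _ => Finset.sum_congr rfl fun i hi =>
              hstep2 a i hi
        _ = ∑ i ∈ Finset.range n, ∫ ω, ∑ a, (W i ω a) ^ 2 ∂(ℙ : Measure Ω) := by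
            rw [Finset.sum_comm]
            exact Finset.sum_congr rfl fun i _ =>
              (integral_finset_sum _ fun a _ => by
                have := hWWint i i a
                simpa [sq] using this).symm
        _ ≤ ∑ i ∈ Finset.range n, (∑ a, ∑ b, (B i a b) ^ 2) * τ :=
            Finset.sum_le_sum fun i _ => hWdiag i
        _ = (∑ i ∈ Finset.range n, ∑ a, ∑ b, (B i a b) ^ 2) * τ := by
            rw [Finset.sum_mul]
  -- ====================================================================
  -- Part 3 : bound on the coefficients; `FrobSq (A m) ≤ K * m ^ (q - 1)`
  -- ====================================================================
  obtain ⟨N, hN⟩ := hAL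
  have hKexists : ∃ K : ℝ, 0 < K ∧ ∀ m : ℕ, 1 ≤ m →
      (∑ a, ∑ b, (A m a b) ^ 2) ≤ K * (m : ℝ) ^ (q - 1) := by
    have hpot : ∀ a b : Fin r, ∃ C : ℝ, 0 < C ∧ ∀ x : ℝ, 1 ≤ x →
        |L x a b| ≤ C * x ^ (ζ / 2) := by
      intro a b
      refine potter_bound (fun x => L x a b) ?_ ?_ (ζ / 2) (half_pos hζ0)
      · exact (continuous_apply b).comp ((continuous_apply a).comp hLcont)
      · exact hLslow a b 2 (by norm_num)
    choose Cp hCp0 hCp using hpot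
    set K₁ : ℝ := ∑ a, ∑ b, (Cp a b) ^ 2 with hK₁_def
    have hK₁0 : 0 ≤ K₁ :=
      Finset.sum_nonneg fun a _ => Finset.sum_nonneg fun b _ => sq_nonneg _
    set N₀ : ℕ := max N 1 with hN₀_def
    have hN₀pos : 0 < N₀ := lt_of_lt_of_le one_pos (le_max_right _ _)
    have hN₀R : (0:ℝ) < (N₀ : ℝ) := by exact_mod_cast hN₀pos
    set Sf : ℝ := ∑ m ∈ Finset.range (N₀ + 1), ∑ a, ∑ b, (A m a b) ^ 2 with hSf_def
    have hSf0 : 0 ≤ Sf := Finset.sum_nonneg fun m _ =>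
      Finset.sum_nonneg fun a _ => Finset.sum_nonneg fun b _ => sq_nonneg _
    refine ⟨K₁ + (Sf + 1) * (N₀ : ℝ) ^ (1 - q), by positivity, ?_⟩
    intro m hm
    have hm0 : (0:ℝ) < (m : ℝ) := by exact_mod_cast hm
    have hm1 : (1:ℝ) ≤ (m : ℝ) := by exact_mod_cast hm
    have hmq : (0:ℝ) < (m : ℝ) ^ (q - 1) := Real.rpow_pos_of_pos hm0 _
    by_cases hcase : N₀ ≤ m
    · -- large m : use the representation and the Potter bound
      have hAm : A m = ((m : ℝ) ^ (d - 1)) • L (m : ℝ) :=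
        hN m (le_trans (le_max_left _ _) hcase)
      have hfr : (∑ a, ∑ b, (A m a b) ^ 2)
          = ((m : ℝ) ^ (d - 1)) ^ 2 * ∑ a, ∑ b, (L (m : ℝ) a b) ^ 2 := by
        rw [hAm, Finset.mul_sum]
        refine Finset.sum_congr rfl fun a _ => ?_
        rw [Finset.mul_sum]
        refine Finset.sum_congr rfl fun b _ => ?_
        simp only [Matrix.smul_apply, smul_eq_mul]
        ring
      have hLb : (∑ a, ∑ b, (L (m : ℝ) a b) ^ 2) ≤ K₁ * (m : ℝ) ^ ζ := by
        rw [hK₁_def, Finset.sum_mul]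
        refine Finset.sum_le_sum fun a _ => ?_
        rw [Finset.sum_mul]
        refine Finset.sum_le_sum fun b _ => ?_
        have h1 := hCp a b (m : ℝ) hm1
        have h2 : (L (m : ℝ) a b) ^ 2 ≤ (Cp a b * (m : ℝ) ^ (ζ / 2)) ^ 2 := by
          rw [← sq_abs]
          exact pow_le_pow_left₀ (abs_nonneg _) h1 2
        have h3 : ((m : ℝ) ^ (ζ / 2)) ^ 2 = (m : ℝ) ^ ζ := by
          rw [sq, ← Real.rpow_add hm0]; norm_num
        calc (L (m : ℝ) a b) ^ 2 ≤ (Cp a b * (m : ℝ) ^ (ζ / 2)) ^ 2 := h2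
          _ = (Cp a b) ^ 2 * ((m : ℝ) ^ (ζ / 2)) ^ 2 := by ring
          _ = (Cp a b) ^ 2 * (m : ℝ) ^ ζ := by rw [h3]
      have hd2 : ((m : ℝ) ^ (d - 1)) ^ 2 = (m : ℝ) ^ (2 * d - 2) := by
        rw [sq, ← Real.rpow_add hm0]; ring_nf
      have hsplit : (m : ℝ) ^ (2 * d - 2) * (m : ℝ) ^ ζ = (m : ℝ) ^ (q - 1) := by
        rw [← Real.rpow_add hm0]
        congr 1
        simp only [hq_def]; ring
      have hfinal : (∑ a, ∑ b, (A m a b) ^ 2) ≤ K₁ * (m : ℝ) ^ (q - 1) := by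
        rw [hfr, hd2]
        calc (m : ℝ) ^ (2 * d - 2) * ∑ a, ∑ b, (L (m : ℝ) a b) ^ 2
            ≤ (m : ℝ) ^ (2 * d - 2) * (K₁ * (m : ℝ) ^ ζ) :=
              mul_le_mul_of_nonneg_left hLb (Real.rpow_nonneg hm0.le _)
          _ = K₁ * ((m : ℝ) ^ (2 * d - 2) * (m : ℝ) ^ ζ) := by ring
          _ = K₁ * (m : ℝ) ^ (q - 1) := by rw [hsplit]
      nlinarith [mul_pos (mul_pos (by linarith : (0:ℝ) < Sf + 1)
        (Real.rpow_pos_of_pos hN₀R (1 - q))) hmq]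
    · -- small m : finitely many values
      push_neg at hcase
      have hmem : m ∈ Finset.range (N₀ + 1) := Finset.mem_range.mpr (by omega)
      have h1 : (∑ a, ∑ b, (A m a b) ^ 2) ≤ Sf :=
        Finset.single_le_sum (f := fun m => ∑ a, ∑ b, (A m a b) ^ 2)
          (fun i _ => Finset.sum_nonneg fun a _ => Finset.sum_nonneg fun b _ => sq_nonneg _)
          hmem
      have h2 : (N₀ : ℝ) ^ (q - 1) ≤ (m : ℝ) ^ (q - 1) := by
        refine Real.rpow_le_rpow_of_nonpos hm0 ?_ (by linarith)
        exact_mod_cast hcase.le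
      have h3 : (N₀ : ℝ) ^ (1 - q) * (N₀ : ℝ) ^ (q - 1) = 1 := by
        rw [← Real.rpow_add hN₀R]; norm_num
      have h4 : (Sf + 1) * ((N₀ : ℝ) ^ (1 - q) * (m : ℝ) ^ (q - 1)) ≥ Sf + 1 := by
        have h5 : (N₀ : ℝ) ^ (1 - q) * (m : ℝ) ^ (q - 1) ≥ 1 := by
          calc (N₀ : ℝ) ^ (1 - q) * (m : ℝ) ^ (q - 1)
              ≥ (N₀ : ℝ) ^ (1 - q) * (N₀ : ℝ) ^ (q - 1) :=
                mul_le_mul_of_nonneg_left h2 (Real.rpow_nonneg hN₀R.le _)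
            _ = 1 := h3
        nlinarith
      nlinarith [mul_nonneg hK₁0 hmq.le]
  obtain ⟨K, hK0, hK⟩ := hKexists
  -- tail sums of the coefficient bounds
  have tail_bound : ∀ j : ℕ, 1 ≤ j →
      Summable (fun i : ℕ => ∑ a, ∑ b, (A (j + 1 + i) a b) ^ 2) ∧
      (∑' i : ℕ, ∑ a, ∑ b, (A (j + 1 + i) a b) ^ 2) ≤ K * ((j : ℝ) ^ q / (-q)) := by
    intro j hj
    obtain ⟨hsum, hts⟩ := rpow_tail_sum q hq0 hq1 j hj
    have hle : ∀ i : ℕ, (∑ a, ∑ b, (A (j + 1 + i) a b) ^ 2)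
        ≤ K * ((j : ℝ) + 1 + i) ^ (q - 1) := by
      intro i
      have h1 : 1 ≤ j + 1 + i := by omega
      have := hK (j + 1 + i) h1
      have hcast : ((j + 1 + i : ℕ) : ℝ) = (j : ℝ) + 1 + i := by push_cast; ring
      rwa [hcast] at this
    have hnn : ∀ i : ℕ, 0 ≤ ∑ a, ∑ b, (A (j + 1 + i) a b) ^ 2 :=
      fun i => Finset.sum_nonneg fun a _ => Finset.sum_nonneg fun b _ => sq_nonneg _
    have hsum2 : Summable (fun i : ℕ => ∑ a, ∑ b, (A (j + 1 + i) a b) ^ 2) :=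
      Summable.of_nonneg_of_le hnn hle (hsum.mul_left K)
    refine ⟨hsum2, ?_⟩
    calc (∑' i : ℕ, ∑ a, ∑ b, (A (j + 1 + i) a b) ^ 2)
        ≤ ∑' i : ℕ, K * ((j : ℝ) + 1 + i) ^ (q - 1) :=
          Summable.tsum_le_tsum hle hsum2 (hsum.mul_left K)
      _ = K * ∑' i : ℕ, ((j : ℝ) + 1 + i) ^ (q - 1) := tsum_mul_left
      _ ≤ K * ((j : ℝ) ^ q / (-q)) := by
          exact mul_le_mul_of_nonneg_left hts hK0.le
  -- ====================================================================
  -- Part 4 : Fatou argument and conclusion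
  -- ====================================================================
  refine ⟨max (τ * (K / (-q))) 1, lt_of_lt_of_le one_pos (le_max_right _ _), ?_⟩
  intro t j hj
  set W : ℕ → Ω → Fin r → ℝ :=
    fun i ω => (A (j + 1 + i)).mulVec (Z (t - ((j : ℤ) + 1 + (i : ℤ))) ω) with hW_def
  have hWmeas : ∀ i : ℕ, Measurable (W i) := by
    intro i
    refine measurable_pi_lambda _ fun a => ?_
    simp only [hW_def, Matrix.mulVec, dotProduct]
    exact Finset.measurable_sum _ fun b _ =>
      (measurable_const.mul ((measurable_pi_apply b).comp (hZmeas _)))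
  set S : ℕ → Ω → ℝ := fun n ω => ∑ a, (∑ i ∈ Finset.range n, W i ω a) ^ 2 with hS_def
  have hSmeas : ∀ n, Measurable (S n) := by
    intro n
    refine Finset.measurable_sum _ fun a _ => ?_
    refine Measurable.pow_const ?_ 2
    exact Finset.measurable_sum _ fun i _ => (measurable_pi_apply a).comp (hWmeas i)
  -- a.e. convergence
  have h_tendsto : ∀ᵐ ω ∂(ℙ : Measure Ω),
      Tendsto (fun n => S n ω) atTop (𝓝 (∑ a, (R t j ω a) ^ 2)) := by
    filter_upwards [hR t j] with ω hω
    have h1 : Tendsto (fun n => ∑ i ∈ Finset.range n, W i ω) atTop (𝓝 (R t j ω)) :=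
      hω.tendsto_sum_nat
    have hcont : Continuous fun v : Fin r → ℝ => ∑ a, (v a) ^ 2 :=
      continuous_finset_sum _ fun a _ => (continuous_apply a).pow 2
    have h2 := (hcont.tendsto (R t j ω)).comp h1
    convert h2 using 2 with n
    simp only [hS_def, Function.comp]
    refine Finset.sum_congr rfl fun a _ => ?_
    rw [Finset.sum_apply]
  -- a.e. measurability of the limit
  have hRmeas : AEMeasurable (R t j) (ℙ : Measure Ω) := by
    have hmeas : ∀ n : ℕ, AEMeasurable (fun ω => ∑ i ∈ Finset.range n, W i ω)
        (ℙ : Measure Ω) := fun n =>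
      (Finset.measurable_sum (Finset.range n) fun i _ => hWmeas i).aemeasurable
    have htd : ∀ᵐ ω ∂(ℙ : Measure Ω),
        Tendsto (fun n => ∑ i ∈ Finset.range n, W i ω) atTop (𝓝 (R t j ω)) := by
      filter_upwards [hR t j] with ω hω
      exact hω.tendsto_sum_nat
    exact aemeasurable_of_tendsto_metrizable_ae atTop hmeas htd
  have hgmeas : AEStronglyMeasurable (fun ω => ∑ a, (R t j ω a) ^ 2) (ℙ : Measure Ω) := by
    refine (Finset.aemeasurable_fun_sum _ fun a _ => ?_).aestronglyMeasurable
    exact ((measurable_pi_apply a).comp_aemeasurable hRmeas).pow_const 2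
  -- the uniform bound
  set bound : ℝ := τ * (K * ((j : ℝ) ^ q / (-q))) with hbound_def
  have hbound0 : 0 ≤ bound := by
    have : (0:ℝ) ≤ (j : ℝ) ^ q / (-q) := by
      apply div_nonneg (Real.rpow_nonneg (Nat.cast_nonneg j) q) (by linarith)
    positivity
  have hSbound : ∀ n, ∫ ω, S n ω ∂(ℙ : Measure Ω) ≤ bound := by
    intro n
    have h1 := (moment_bound t j n).2
    have h2 : (∑ i ∈ Finset.range n, ∑ a, ∑ b, (A (j + 1 + i) a b) ^ 2)
        ≤ ∑' i : ℕ, ∑ a, ∑ b, (A (j + 1 + i) a b) ^ 2 :=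
      Summable.sum_le_tsum (Finset.range n)
        (fun i _ => Finset.sum_nonneg fun a _ => Finset.sum_nonneg fun b _ => sq_nonneg _)
        (tail_bound j hj).1
    have h3 := (tail_bound j hj).2
    calc ∫ ω, S n ω ∂(ℙ : Measure Ω)
        ≤ (∑ i ∈ Finset.range n, ∑ a, ∑ b, (A (j + 1 + i) a b) ^ 2) * τ := h1
      _ ≤ (K * ((j : ℝ) ^ q / (-q))) * τ := by
          refine mul_le_mul_of_nonneg_right (le_trans h2 h3) hτ0
      _ = bound := by rw [hbound_def]; ring
  have hSint : ∀ n, Integrable (S n) (ℙ : Measure Ω) := fun n => (moment_bound t j n).1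
  have hSnn : ∀ n, (0:Ω → ℝ) ≤ᵐ[(ℙ : Measure Ω)] S n := fun n =>
    Filter.Eventually.of_forall fun ω => by
      simp only [hS_def, Pi.zero_apply]
      exact Finset.sum_nonneg fun a _ => sq_nonneg _
  -- Fatou
  have hlin : ∫⁻ ω, ENNReal.ofReal (∑ a, (R t j ω a) ^ 2) ∂(ℙ : Measure Ω)
      ≤ ENNReal.ofReal bound := by
    have hfatou : ∫⁻ ω, ENNReal.ofReal (∑ a, (R t j ω a) ^ 2) ∂(ℙ : Measure Ω)
        ≤ liminf (fun n => ∫⁻ ω, ENNReal.ofReal (S n ω) ∂(ℙ : Measure Ω)) atTop := by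
      have heq : ∀ᵐ ω ∂(ℙ : Measure Ω), ENNReal.ofReal (∑ a, (R t j ω a) ^ 2)
          = liminf (fun n => ENNReal.ofReal (S n ω)) atTop := by
        filter_upwards [h_tendsto] with ω hω
        exact ((ENNReal.continuous_ofReal.tendsto _).comp hω).liminf_eq.symm
      calc ∫⁻ ω, ENNReal.ofReal (∑ a, (R t j ω a) ^ 2) ∂(ℙ : Measure Ω)
          = ∫⁻ ω, liminf (fun n => ENNReal.ofReal (S n ω)) atTop ∂(ℙ : Measure Ω) :=
            lintegral_congr_ae heq
        _ ≤ liminf (fun n => ∫⁻ ω, ENNReal.ofReal (S n ω) ∂(ℙ : Measure Ω)) atTop :=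
            lintegral_liminf_le fun n => ENNReal.measurable_ofReal.comp (hSmeas n)
    refine le_trans hfatou ?_
    have h4 : ∀ n, ∫⁻ ω, ENNReal.ofReal (S n ω) ∂(ℙ : Measure Ω) ≤ ENNReal.ofReal bound := by
      intro n
      rw [← ofReal_integral_eq_lintegral_ofReal (hSint n) (hSnn n)]
      exact ENNReal.ofReal_le_ofReal (hSbound n)
    calc liminf (fun n => ∫⁻ ω, ENNReal.ofReal (S n ω) ∂(ℙ : Measure Ω)) atTop
        ≤ liminf (fun _ : ℕ => ENNReal.ofReal bound) atTop :=
          liminf_le_liminf (Filter.Eventually.of_forall h4)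
      _ = ENNReal.ofReal bound := liminf_const _
  -- conclude
  have hfinal : ∫ ω, ∑ a, (R t j ω a) ^ 2 ∂(ℙ : Measure Ω) ≤ bound := by
    rw [integral_eq_lintegral_of_nonneg_ae
      (Filter.Eventually.of_forall fun ω => Finset.sum_nonneg fun a _ => sq_nonneg _) hgmeas]
    calc (∫⁻ ω, ENNReal.ofReal (∑ a, (R t j ω a) ^ 2) ∂(ℙ : Measure Ω)).toReal
        ≤ (ENNReal.ofReal bound).toReal :=
          ENNReal.toReal_mono ENNReal.ofReal_ne_top hlin
      _ = bound := ENNReal.toReal_ofReal hbound0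
  have hjq : (0:ℝ) < (j : ℝ) ^ q :=
    Real.rpow_pos_of_pos (by exact_mod_cast Nat.pos_of_ne_zero (by omega)) q
  calc ∫ ω, ∑ a, (R t j ω a) ^ 2 ∂(ℙ : Measure Ω) ≤ bound := hfinal
    _ = (τ * (K / (-q))) * (j : ℝ) ^ q := by rw [hbound_def]; ring
    _ ≤ max (τ * (K / (-q))) 1 * (j : ℝ) ^ q :=
        mul_le_mul_of_nonneg_right (le_max_left _ _) hjq.le
end
end
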